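/- Let X_1,…,X_n ∈ ℝ^d satisfy ‖X_j‖² ≤ β for all j and ⟨X_i, X_j⟩ ≥ C for all i, j. Then for every i, ‖∑_{j=1}^n (σ(⟨X_i, X_j⟩) − 1) X_j‖ ≤ n · exp(−C) · √β. That is, the i-th row of the difference between the all-to-all skip-gram repulsion field K X (with K_{ij} = σ(⟨X_i, X_j⟩)) and the dimension-mean regularization field 𝟏 X (whose i-th row is ∑_j X_j) has norm at most n e^{−C} √β. -/

import Mathlib

open RealInnerProductSpace BigOperators

/-- The logistic sigmoid function `σ(x) = 1 / (1 + exp (-x))`. -/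
noncomputable def sigmoid (x : ℝ) : ℝ := 1 / (1 + Real.exp (-x))

lemma sigmoid_sub_one_abs (x : ℝ) : |sigmoid x - 1| ≤ Real.exp (-x) := by
  have hx : 0 < Real.exp (-x) := Real.exp_pos _
  have h1 : 0 < 1 + Real.exp (-x) := by linarith
  have : sigmoid x - 1 = -(Real.exp (-x) / (1 + Real.exp (-x))) := by
    rw [sigmoid, div_sub_one h1.ne']; ring
  rw [this, abs_neg, abs_of_nonneg (by positivity)]
  rw [div_le_iff₀ h1]
  nlinarith [hx.le]

/-- If `‖X j‖² ≤ β` for all `j` and `⟨X i, X j⟩ ≥ C` for all `i, j`, then for every `i`,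
`‖∑ j, (σ(⟨X i, X j⟩) - 1) X j‖ ≤ n · exp(-C) · √β`. -/
theorem row_diff_norm_le {n d : ℕ} (X : Fin n → EuclideanSpace ℝ (Fin d))
    (β C : ℝ) (hβ : 0 < β)
    (hnorm : ∀ j, ‖X j‖ ^ 2 ≤ β)
    (hconstr : ∀ i j, C ≤ ⟪X i, X j⟫) :
    ∀ i, ‖∑ j, (sigmoid ⟪X i, X j⟫ - 1) • X j‖ ≤ n * Real.exp (-C) * Real.sqrt β := by
  intro i
  have key : ∀ j, ‖(sigmoid ⟪X i, X j⟫ - 1) • X j‖ ≤ Real.exp (-C) * Real.sqrt β := by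
    intro j
    rw [norm_smul]
    have h1 : ‖sigmoid ⟪X i, X j⟫ - 1‖ ≤ Real.exp (-C) := by
      refine (sigmoid_sub_one_abs _).trans ?_
      exact Real.exp_le_exp.mpr (by linarith [hconstr i j])
    have h2 : ‖X j‖ ≤ Real.sqrt β := by
      have := hnorm j
      nlinarith [Real.sq_sqrt hβ.le, Real.sqrt_nonneg β, norm_nonneg (X j)]
    exact mul_le_mul h1 h2 (norm_nonneg _) (Real.exp_pos _).le
  calc ‖∑ j, (sigmoid ⟪X i, X j⟫ - 1) • X j‖
      ≤ ∑ j : Fin n, (Real.exp (-C) * Real.sqrt β) :=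
        (norm_sum_le _ _).trans (Finset.sum_le_sum fun j _ => key j)
    _ = n * Real.exp (-C) * Real.sqrt β := by
        simp [Finset.sum_const, mul_assoc]
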